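/- Fix d ≥ 1 and D = {0,…,d}. Let A ∈ ℝ^{4×3} with no forbidden pattern. Then A is universally connected: for every b ∈ ℝ^4, the graph on {x ∈ D^3 : Ax ≥ b} with edges between solutions at Hamming distance 1 is connected. -/

import Mathlib

open Matrix Finset
open scoped Classical

/-- `A` has a forbidden pattern: there are `lam ≥ 1` rows and columns, with
orderings (injective enumerations) `r`, `c`, such that in column `c l` all rows
of the pattern other than `r l`, `r (l+1)` vanish (cyclically), and
`A (r l) (c l) * A (r (l+1)) (c l) < 0` for every `l`. -/
def HasFP {m n : ℕ} (A : Matrix (Fin m) (Fin n) ℝ) : Prop :=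
  ∃ lam : ℕ, ∃ r : Fin (lam + 1) → Fin m, ∃ c : Fin (lam + 1) → Fin n,
    Function.Injective r ∧ Function.Injective c ∧
    (∀ l k : Fin (lam + 1), k ≠ l → k ≠ l + 1 → A (r k) (c l) = 0) ∧
    (∀ l : Fin (lam + 1), A (r l) (c l) * A (r (l + 1)) (c l) < 0)

/-- `A`, restricted to the set `S` of remaining columns, can be eliminated at column `j`. -/
def CanElim {m n : ℕ} (A : Matrix (Fin m) (Fin n) ℝ) (S : Finset (Fin n)) (j : Fin n) : Prop :=
  (∀ i, 0 < A i j → ∀ j' ∈ S, j' ≠ j → A i j' = 0) ∨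
  (∀ i, A i j < 0 → ∀ j' ∈ S, j' ≠ j → A i j' = 0)

/-- `A` has an elimination ordering. -/
def HasEO {m n : ℕ} (A : Matrix (Fin m) (Fin n) ℝ) : Prop :=
  ∃ e : Fin n ≃ Fin n, ∀ t : Fin n,
    CanElim A (Finset.univ.filter fun c => ∀ s : Fin n, s < t → e s ≠ c) (e t)

/-- `x ∈ {0,…,d}ⁿ` is a feasible solution of the integer linear system `A x ≥ b`. -/
def Feas {m n : ℕ} (d : ℕ) (A : Matrix (Fin m) (Fin n) ℝ) (b : Fin m → ℝ)
    (x : Fin n → ℕ) : Prop :=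
  (∀ j, x j ≤ d) ∧ ∀ i, b i ≤ ∑ j, A i j * (x j : ℝ)

/-- Adjacency in the solution graph `G(A,b)`: both endpoints are feasible and
their Hamming distance is `1`. -/
def SGAdj {m n : ℕ} (d : ℕ) (A : Matrix (Fin m) (Fin n) ℝ) (b : Fin m → ℝ)
    (x y : Fin n → ℕ) : Prop :=
  Feas d A b x ∧ Feas d A b y ∧ hammingDist x y = 1

/-- The solution graph `G(A,b)` is connected. -/
def SGConn {m n : ℕ} (d : ℕ) (A : Matrix (Fin m) (Fin n) ℝ) (b : Fin m → ℝ) : Prop :=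
  ∀ x y : Fin n → ℕ, Feas d A b x → Feas d A b y →
    Relation.ReflTransGen (SGAdj d A b) x y

/-- `A` is universally connected. -/
def UnivConn {m n : ℕ} (d : ℕ) (A : Matrix (Fin m) (Fin n) ℝ) : Prop :=
  ∀ b : Fin m → ℝ, SGConn d A b


/- ### sign lemmas -/

lemma sgn_ne {x y : ℝ} (h : x * y < 0) : x ≠ y := by
  rintro rfl; nlinarith [mul_self_nonneg x]

lemma sgnZ {a b x : ℝ} (hab : a * b < 0) (h1 : ¬ x * a < 0) (h2 : ¬ x * b < 0) : x = 0 := by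
  push_neg at h1 h2
  by_contra hx
  have hxx : 0 < x * x := mul_self_pos.mpr hx
  have hid : (x * a) * (x * b) = (x * x) * (a * b) := by ring
  have hlt : (x * x) * (a * b) < 0 := mul_neg_of_pos_of_neg hxx hab
  have hge : 0 ≤ (x * a) * (x * b) := mul_nonneg h1 h2
  linarith

lemma sgnPos {x y : ℝ} (h : ¬ x * y < 0) (hx : x ≠ 0) (hy : y ≠ 0) : 0 < x * y := by
  push_neg at h
  exact lt_of_le_of_ne h (Ne.symm (mul_ne_zero hx hy))

lemma sgnTrans {x y z : ℝ} (h1 : 0 < x * y) (h2 : y * z < 0) : x * z < 0 := by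
  by_contra hcon
  push_neg at hcon
  have hy : y ≠ 0 := left_ne_zero_of_mul (ne_of_lt h2)
  have hyy : 0 < y * y := mul_self_pos.mpr hy
  have hid : (x * y) * (y * z) = (y * y) * (x * z) := by ring
  have : (x * y) * (y * z) < 0 := mul_neg_of_pos_of_neg h1 h2
  nlinarith

/- ### Fin covers -/

lemma fin3_cover (m s1 s2 : Fin 3) (h1 : m ≠ s1) (h2 : m ≠ s2) (h3 : s1 ≠ s2) (j : Fin 3) :
    j = m ∨ j = s1 ∨ j = s2 := by
  simp only [Fin.ext_iff] at *
  omega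

lemma fin4_cover (a b c d : Fin 4) (h1 : a ≠ b) (h2 : a ≠ c) (h3 : a ≠ d) (h4 : b ≠ c)
    (h5 : b ≠ d) (h6 : c ≠ d) (i : Fin 4) : i = a ∨ i = b ∨ i = c ∨ i = d := by
  simp only [Fin.ext_iff] at *
  omega

lemma inj2 {α : Type*} (i k : α) (h : i ≠ k) : Function.Injective ![i, k] := by
  intro a b hab
  fin_cases a <;> fin_cases b <;> simp_all

lemma inj3 {α : Type*} (i k l : α) (h1 : i ≠ k) (h2 : i ≠ l) (h3 : k ≠ l) :
    Function.Injective ![i, k, l] := by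
  intro a b hab
  fin_cases a <;> fin_cases b <;> simp_all

lemma sum3 (f : Fin 3 → ℝ) (m s1 s2 : Fin 3) (h1 : m ≠ s1) (h2 : m ≠ s2) (h3 : s1 ≠ s2) :
    ∑ j, f j = f m + f s1 + f s2 := by
  have huniv : (Finset.univ : Finset (Fin 3)) = {m, s1, s2} := by
    symm
    apply Finset.eq_univ_of_card
    rw [Finset.card_insert_of_notMem (by simp [h1, h2]),
      Finset.card_insert_of_notMem (by simp [h3])]
    simp
  rw [huniv, Finset.sum_insert (by simp [h1, h2]), Finset.sum_insert (by simp [h3]),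
    Finset.sum_singleton, add_assoc]

lemma hamming_update {n : ℕ} (x : Fin n → ℕ) (j : Fin n) (s t : ℕ) (hst : s ≠ t) :
    hammingDist (Function.update x j s) (Function.update x j t) = 1 := by
  have : (Finset.univ.filter fun i => Function.update x j s i ≠ Function.update x j t i) = {j} := by
    ext i
    by_cases hij : i = j
    · subst hij; simp [hst]
    · simp [Function.update_of_ne hij, hij]
  rw [hammingDist, this, Finset.card_singleton]

lemma sgadj_symm {m n : ℕ} (d : ℕ) (A : Matrix (Fin m) (Fin n) ℝ) (b : Fin m → ℝ) :
    Symmetric (SGAdj d A b) := by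
  rintro x y ⟨hx, hy, hd⟩
  exact ⟨hy, hx, by rwa [hammingDist_comm]⟩

lemma rtg_symm {m n : ℕ} {d : ℕ} {A : Matrix (Fin m) (Fin n) ℝ} {b : Fin m → ℝ}
    {x y : Fin n → ℕ} (h : Relation.ReflTransGen (SGAdj d A b) x y) :
    Relation.ReflTransGen (SGAdj d A b) y x :=
  (@Relation.ReflTransGen.symmetric _ _ ⟨fun _ _ hh => sgadj_symm d A b hh⟩).symm _ _ h

lemma walkUp {m n : ℕ} {d : ℕ} {A : Matrix (Fin m) (Fin n) ℝ} {b : Fin m → ℝ}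
    (x : Fin n → ℕ) (j : Fin n) (s t : ℕ) (hst : s ≤ t)
    (H : ∀ v : ℕ, s ≤ v → v ≤ t → Feas d A b (Function.update x j v)) :
    Relation.ReflTransGen (SGAdj d A b) (Function.update x j s) (Function.update x j t) := by
  induction t, hst using Nat.le_induction with
  | base => exact Relation.ReflTransGen.refl
  | succ t ht ih =>
    refine Relation.ReflTransGen.tail (ih fun v hv hv' => H v hv (by omega)) ?_
    exact ⟨H t ht (by omega), H (t+1) (by omega) le_rfl, hamming_update x j t (t+1) (by omega)⟩

lemma walk {m n : ℕ} {d : ℕ} {A : Matrix (Fin m) (Fin n) ℝ} {b : Fin m → ℝ}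
    (x : Fin n → ℕ) (j : Fin n) (t : ℕ)
    (H : ∀ v : ℕ, min t (x j) ≤ v → v ≤ max t (x j) → Feas d A b (Function.update x j v)) :
    Relation.ReflTransGen (SGAdj d A b) x (Function.update x j t) := by
  rcases le_total (x j) t with h | h
  · have := walkUp x j (x j) t h (fun v hv hv' => H v (by omega) (by omega))
    rwa [Function.update_eq_self] at this
  · have := walkUp x j t (x j) h (fun v hv hv' => H v (by omega) (by omega))
    rw [Function.update_eq_self] at this
    exact rtg_symm this

lemma noDouble {m n : ℕ} {A : Matrix (Fin m) (Fin n) ℝ} (h : ¬ HasFP A)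
    {i k : Fin m} {j j' : Fin n} (hjj : j ≠ j')
    (h1 : A i j * A k j < 0) (h2 : A i j' * A k j' < 0) : False := by
  have hik : i ≠ k := fun he => sgn_ne h1 (by rw [he])
  refine h ⟨1, ![i, k], ![j, j'], inj2 i k hik, inj2 j j' hjj, ?_, ?_⟩
  · intro l kk hl hl1
    exfalso
    fin_cases l <;> fin_cases kk <;> first | exact hl rfl | exact hl1 rfl
  · intro l
    fin_cases l
    · simpa using h1
    · have : (1 + 1 : Fin 2) = 0 := rfl
      simpa [this] using (by rw [mul_comm] at h2; exact h2 : A k j' * A i j' < 0)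


lemma noTriangle {m n : ℕ} {A : Matrix (Fin m) (Fin n) ℝ} (h : ¬ HasFP A)
    {u v w : Fin m} {i j k : Fin n} (hij : i ≠ j) (hik : i ≠ k) (hjk : j ≠ k)
    (o1 : A u i * A v i < 0) (o2 : A v j * A w j < 0) (o3 : A w k * A u k < 0) : False := by
  have o2' : A w j * A v j < 0 := by rw [mul_comm]; exact o2
  have o3' : A u k * A w k < 0 := by rw [mul_comm]; exact o3
  have o1' : A v i * A u i < 0 := by rw [mul_comm]; exact o1
  have hwi : A w i = 0 := sgnZ o1 (fun hc => noDouble h hik hc o3) (fun hc => noDouble h hij hc o2')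
  have huj : A u j = 0 := sgnZ o2 (fun hc => noDouble h (Ne.symm hij) hc o1)
    (fun hc => noDouble h hjk hc o3')
  have hvk : A v k = 0 := sgnZ o3 (fun hc => noDouble h (Ne.symm hjk) hc o2)
    (fun hc => noDouble h (Ne.symm hik) hc o1')
  have huv : u ≠ v := by rintro rfl; nlinarith [mul_self_nonneg (A u i)]
  have hvw : v ≠ w := by rintro rfl; nlinarith [mul_self_nonneg (A v j)]
  have huw : u ≠ w := by rintro rfl; nlinarith [mul_self_nonneg (A u k)]
  refine h ⟨2, ![u, v, w], ![i, j, k], inj3 u v w huv huw hvw, inj3 i j k hij hik hjk, ?_, ?_⟩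
  · intro l kk hl hl1
    fin_cases l <;> fin_cases kk <;>
      first
        | exact absurd rfl hl
        | exact absurd rfl hl1
        | exact hwi
        | exact huj
        | exact hvk
  · intro l
    fin_cases l
    · exact o1
    · exact o2
    · exact o3

lemma connAux {m n : ℕ} (d : ℕ) (A : Matrix (Fin m) (Fin n) ℝ) (b : Fin m → ℝ)
    (S : Finset (Fin n)) :
    (∀ T ⊆ S, T.Nonempty → ∃ j ∈ T, CanElim A T j) →
    ∀ x y : Fin n → ℕ, Feas d A b x → Feas d A b y → (∀ j ∉ S, x j = y j) →
    Relation.ReflTransGen (SGAdj d A b) x y := by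
  induction S using Finset.strongInduction with
  | _ S ih =>
  intro hS x y hx hy hagree
  rcases S.eq_empty_or_nonempty with rfl | hne
  · have hxy : x = y := funext fun j => hagree j (by simp)
    rw [hxy]
  obtain ⟨j, hjS, helim⟩ := hS S Finset.Subset.rfl hne
  have sum_split : ∀ (i : Fin m) (z : Fin n → ℕ) (v : ℕ),
      ∑ j', A i j' * ((Function.update z j v) j' : ℝ)
        = A i j * (v : ℝ) + ∑ j' ∈ Finset.univ.erase j, A i j' * (z j' : ℝ) := by
    intro i z v
    rw [← Finset.sum_erase_add _ _ (Finset.mem_univ j)]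
    have h1 : ∀ j' ∈ Finset.univ.erase j,
        A i j' * ((Function.update z j v) j' : ℝ) = A i j' * (z j' : ℝ) := fun j' hj' => by
      rw [Function.update_of_ne (Finset.ne_of_mem_erase hj')]
    rw [Finset.sum_congr rfl h1, Function.update_self]
    ring
  have sum_plain : ∀ (i : Fin m) (z : Fin n → ℕ),
      ∑ j', A i j' * (z j' : ℝ)
        = A i j * (z j : ℝ) + ∑ j' ∈ Finset.univ.erase j, A i j' * (z j' : ℝ) := by
    intro i z
    have := sum_split i z (z j)
    rwa [Function.update_eq_self] at this
  have hrec : ∀ T ⊆ S.erase j, T.Nonempty → ∃ j' ∈ T, CanElim A T j' :=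
    fun T hT hTne => hS T (hT.trans (Finset.erase_subset _ _)) hTne
  have hagree_after : ∀ (L : ℕ), ∀ j' ∉ S.erase j,
      Function.update x j L j' = Function.update y j L j' := by
    intro L j' hj'
    by_cases hjj : j' = j
    · subst hjj; rw [Function.update_self, Function.update_self]
    · have hj'S : j' ∉ S := fun hmem => hj' (Finset.mem_erase.mpr ⟨hjj, hmem⟩)
      rw [Function.update_of_ne hjj, Function.update_of_ne hjj]
      exact hagree j' hj'S
  rcases helim with hP | hN
  · -- positive side zero outside j : go down to the min
    have main : ∀ z w : Fin n → ℕ, Feas d A b z → Feas d A b w → (∀ j' ∉ S, z j' = w j') →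
        ∀ v : ℕ, min (z j) (w j) ≤ v → v ≤ z j → Feas d A b (Function.update z j v) := by
      intro z w hz hw hzw v hv1 hv2
      constructor
      · intro j'
        by_cases hjj : j' = j
        · rw [hjj, Function.update_self]; exact le_trans hv2 (hz.1 j)
        · rw [Function.update_of_ne hjj]; exact hz.1 j'
      · intro i
        rw [sum_split i z v]
        by_cases hi : 0 < A i j
        · have tl : ∑ j' ∈ Finset.univ.erase j, A i j' * (z j' : ℝ)
              = ∑ j' ∈ Finset.univ.erase j, A i j' * (w j' : ℝ) := by
            apply Finset.sum_congr rfl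
            intro j' hj'
            by_cases hjS' : j' ∈ S
            · rw [hP i hi j' hjS' (Finset.ne_of_mem_erase hj')]; ring
            · rw [hzw j' hjS']
          rcases le_total (z j) (w j) with hzw' | hzw'
          · have hvz : v = z j := le_antisymm hv2 (by omega)
            subst hvz
            have := hz.2 i
            rw [sum_plain i z] at this
            exact this
          · -- min = w j
            have hwv : w j ≤ v := by omega
            have := hw.2 i
            rw [sum_plain i w] at this
            rw [tl]
            have hmono : A i j * ((w j : ℕ) : ℝ) ≤ A i j * (v : ℝ) :=
              mul_le_mul_of_nonneg_left (Nat.cast_le.mpr hwv) (le_of_lt hi)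
            linarith
        · push_neg at hi
          have := hz.2 i
          rw [sum_plain i z] at this
          have hmono : A i j * ((z j : ℕ) : ℝ) ≤ A i j * (v : ℝ) :=
            mul_le_mul_of_nonpos_left (Nat.cast_le.mpr hv2) hi
          linarith
    set L := min (x j) (y j) with hL
    have hLx : L ≤ x j := min_le_left _ _
    have hLy : L ≤ y j := min_le_right _ _
    have pathx : Relation.ReflTransGen (SGAdj d A b) x (Function.update x j L) :=
      walk x j L (fun v hv hv' => main x y hx hy hagree v (by omega) (by omega))
    have pathy : Relation.ReflTransGen (SGAdj d A b) y (Function.update y j L) :=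
      walk y j L (fun v hv hv' =>
        main y x hy hx (fun j' h => (hagree j' h).symm) v (by omega) (by omega))
    have hxL : Feas d A b (Function.update x j L) :=
      main x y hx hy hagree L (by omega) hLx
    have hyL : Feas d A b (Function.update y j L) :=
      main y x hy hx (fun j' h => (hagree j' h).symm) L (by omega) hLy
    have mid := ih (S.erase j) (Finset.erase_ssubset hjS) hrec
      (Function.update x j L) (Function.update y j L) hxL hyL (hagree_after L)
    exact pathx.trans (mid.trans (rtg_symm pathy))
  · -- negative side zero outside j : go up to the max
    have main : ∀ z w : Fin n → ℕ, Feas d A b z → Feas d A b w → (∀ j' ∉ S, z j' = w j') →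
        ∀ v : ℕ, z j ≤ v → v ≤ max (z j) (w j) → Feas d A b (Function.update z j v) := by
      intro z w hz hw hzw v hv1 hv2
      constructor
      · intro j'
        by_cases hjj : j' = j
        · rw [hjj, Function.update_self]
          have := hz.1 j; have := hw.1 j; omega
        · rw [Function.update_of_ne hjj]; exact hz.1 j'
      · intro i
        rw [sum_split i z v]
        by_cases hi : A i j < 0
        · have tl : ∑ j' ∈ Finset.univ.erase j, A i j' * (z j' : ℝ)
              = ∑ j' ∈ Finset.univ.erase j, A i j' * (w j' : ℝ) := by
            apply Finset.sum_congr rfl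
            intro j' hj'
            by_cases hjS' : j' ∈ S
            · rw [hN i hi j' hjS' (Finset.ne_of_mem_erase hj')]; ring
            · rw [hzw j' hjS']
          rcases le_total (w j) (z j) with hzw' | hzw'
          · have hvz : v = z j := by omega
            subst hvz
            have := hz.2 i
            rw [sum_plain i z] at this
            exact this
          · have hwv : v ≤ w j := by omega
            have := hw.2 i
            rw [sum_plain i w] at this
            rw [tl]
            have hmono : A i j * ((w j : ℕ) : ℝ) ≤ A i j * (v : ℝ) :=
              mul_le_mul_of_nonpos_left (Nat.cast_le.mpr hwv) (le_of_lt hi)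
            linarith
        · push_neg at hi
          have := hz.2 i
          rw [sum_plain i z] at this
          have hmono : A i j * ((z j : ℕ) : ℝ) ≤ A i j * (v : ℝ) :=
            mul_le_mul_of_nonneg_left (Nat.cast_le.mpr hv1) hi
          linarith
    set L := max (x j) (y j) with hL
    have hLx : x j ≤ L := le_max_left _ _
    have hLy : y j ≤ L := le_max_right _ _
    have pathx : Relation.ReflTransGen (SGAdj d A b) x (Function.update x j L) :=
      walk x j L (fun v hv hv' => main x y hx hy hagree v (by omega) (by omega))
    have pathy : Relation.ReflTransGen (SGAdj d A b) y (Function.update y j L) :=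
      walk y j L (fun v hv hv' =>
        main y x hy hx (fun j' h => (hagree j' h).symm) v (by omega) (by omega))
    have hxL : Feas d A b (Function.update x j L) :=
      main x y hx hy hagree L hLx (by omega)
    have hyL : Feas d A b (Function.update y j L) :=
      main y x hy hx (fun j' h => (hagree j' h).symm) L hLy (by omega)
    have mid := ih (S.erase j) (Finset.erase_ssubset hjS) hrec
      (Function.update x j L) (Function.update y j L) hxL hyL (hagree_after L)
    exact pathx.trans (mid.trans (rtg_symm pathy))

lemma elimSmall {m n : ℕ} {A : Matrix (Fin m) (Fin n) ℝ} (h : ¬ HasFP A)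
    (T : Finset (Fin n)) (hcard : T.card ≤ 2) (hne : T.Nonempty) :
    ∃ j ∈ T, CanElim A T j := by
  have h1 : 1 ≤ T.card := Finset.card_pos.mpr hne
  interval_cases hc : T.card
  · obtain ⟨j, rfl⟩ := Finset.card_eq_one.mp hc
    exact ⟨j, Finset.mem_singleton_self j,
      Or.inl fun i _ j' hj' hne' => absurd (Finset.mem_singleton.mp hj') hne'⟩
  · obtain ⟨j, k, hjk, rfl⟩ := Finset.card_eq_two.mp hc
    by_contra hcon
    push_neg at hcon
    have hj := hcon j (by simp)
    have hk := hcon k (by simp)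
    rw [CanElim] at hj hk
    push_neg at hj hk
    obtain ⟨⟨i1, hi1, j1, hj1m, hj1ne, hi1k⟩, ⟨i2, hi2, j2, hj2m, hj2ne, hi2k⟩⟩ := hj
    obtain ⟨⟨i3, hi3, j3, hj3m, hj3ne, hi3j⟩, ⟨i4, hi4, j4, hj4m, hj4ne, hi4j⟩⟩ := hk
    have e1 : j1 = k := by rcases Finset.mem_insert.mp hj1m with h' | h' <;> simp_all
    have e2 : j2 = k := by rcases Finset.mem_insert.mp hj2m with h' | h' <;> simp_all
    have e3 : j3 = j := by rcases Finset.mem_insert.mp hj3m with h' | h' <;> simp_all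
    have e4 : j4 = j := by rcases Finset.mem_insert.mp hj4m with h' | h' <;> simp_all
    rw [e1] at hi1k; rw [e2] at hi2k; rw [e3] at hi3j; rw [e4] at hi4j
    rcases lt_trichotomy (A i1 k * A i2 k) 0 with hs | hs | hs
    · exact noDouble h hjk (mul_neg_of_pos_of_neg hi1 hi2) hs
    · exact absurd hs (mul_ne_zero hi1k hi2k)
    · rcases lt_trichotomy (A i1 k) 0 with h1k | h1k | h1k
      · have h2k : A i2 k < 0 := by nlinarith
        rcases lt_trichotomy (A i3 j) 0 with h3j | h3j | h3j
        · exact noDouble h hjk (mul_neg_of_pos_of_neg hi1 h3j)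
            (mul_neg_of_neg_of_pos h1k hi3)
        · exact absurd h3j hi3j
        · exact noDouble h hjk (mul_neg_of_pos_of_neg h3j hi2)
            (mul_neg_of_pos_of_neg hi3 h2k)
      · exact absurd h1k hi1k
      · have h2k : 0 < A i2 k := by nlinarith
        rcases lt_trichotomy (A i4 j) 0 with h4j | h4j | h4j
        · exact noDouble h hjk (mul_neg_of_pos_of_neg hi1 h4j)
            (mul_neg_of_pos_of_neg h1k hi4)
        · exact absurd h4j hi4j
        · exact noDouble h hjk (mul_neg_of_pos_of_neg h4j hi2)
            (mul_neg_of_neg_of_pos hi4 h2k)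

lemma elimAll {A : Matrix (Fin 4) (Fin 3) ℝ} (h : ¬ HasFP A)
    (hE : ∃ j, CanElim A Finset.univ j) :
    ∀ T ⊆ (Finset.univ : Finset (Fin 3)), T.Nonempty → ∃ j ∈ T, CanElim A T j := by
  intro T _ hne
  by_cases hc : T.card ≤ 2
  · exact elimSmall h T hc hne
  · have hc3 : T.card = 3 := le_antisymm (le_trans (Finset.card_le_univ T) (by simp)) (by omega)
    have : T = Finset.univ := Finset.eq_univ_of_card T (by simpa using hc3)
    subst this
    obtain ⟨j, hj⟩ := hE
    exact ⟨j, Finset.mem_univ j, hj⟩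

section Star
variable {A : Matrix (Fin 4) (Fin 3) ℝ}

lemma starCore (hFP : ¬ HasFP A) {x a b c : Fin 4} {Ja Jb Jc : Fin 3}
    (hab : Ja ≠ Jb) (hac : Ja ≠ Jc) (hbc : Jb ≠ Jc)
    (oxa : A x Ja * A a Ja < 0) (oxb : A x Jb * A b Jb < 0) (oxc : A x Jc * A c Jc < 0)
    (haJb : A a Jb ≠ 0)
    (hbext : ∃ z, z ≠ Jb ∧ A b z ≠ 0) (hcext : ∃ z, z ≠ Jc ∧ A c z ≠ 0) : False := by
  have swap : ∀ {r s : Fin 4} {jj : Fin 3}, A r jj * A s jj < 0 → A s jj * A r jj < 0 :=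
    fun h => by rwa [mul_comm]
  have hxJa : A x Ja ≠ 0 := left_ne_zero_of_mul (ne_of_lt oxa)
  have hxJb : A x Jb ≠ 0 := left_ne_zero_of_mul (ne_of_lt oxb)
  have hxJc : A x Jc ≠ 0 := left_ne_zero_of_mul (ne_of_lt oxc)
  have haxb : 0 < A a Jb * A x Jb :=
    sgnPos (fun hc' => noDouble hFP (Ne.symm hab) hc' (swap oxa)) haJb hxJb
  have oab : A a Jb * A b Jb < 0 := sgnTrans haxb oxb
  obtain ⟨z, hz, hcz⟩ := hcext
  rcases fin3_cover Ja Jb Jc hab hac hbc z with h | h | h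
  · -- c has an entry in column Ja
    rw [h] at hcz
    have hcxa : 0 < A c Ja * A x Ja :=
      sgnPos (fun hc' => noDouble hFP hac hc' (swap oxc)) hcz hxJa
    have oca : A c Ja * A a Ja < 0 := sgnTrans hcxa oxa
    obtain ⟨z', hz', hbz⟩ := hbext
    rcases fin3_cover Ja Jb Jc hab hac hbc z' with h' | h' | h'
    · rw [h'] at hbz
      have hbxa : 0 < A b Ja * A x Ja :=
        sgnPos (fun hc' => noDouble hFP hab hc' (swap oxb)) hbz hxJa
      have oba : A b Ja * A a Ja < 0 := sgnTrans hbxa oxa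
      exact noDouble hFP hab (swap oba) oab
    · exact absurd h' hz'
    · rw [h'] at hbz
      have hbxc : 0 < A b Jc * A x Jc :=
        sgnPos (fun hc' => noDouble hFP (Ne.symm hbc) hc' (swap oxb)) hbz hxJc
      have obc : A b Jc * A c Jc < 0 := sgnTrans hbxc oxc
      exact noTriangle hFP hbc (Ne.symm hab) (Ne.symm hac) oab obc oca
  · -- c has an entry in column Jb
    rw [h] at hcz
    have hcxb : 0 < A c Jb * A x Jb :=
      sgnPos (fun hc' => noDouble hFP hbc hc' (swap oxc)) hcz hxJb
    have ocb : A c Jb * A b Jb < 0 := sgnTrans hcxb oxb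
    obtain ⟨z', hz', hbz⟩ := hbext
    rcases fin3_cover Ja Jb Jc hab hac hbc z' with h' | h' | h'
    · rw [h'] at hbz
      have hbxa : 0 < A b Ja * A x Ja :=
        sgnPos (fun hc' => noDouble hFP hab hc' (swap oxb)) hbz hxJa
      have oba : A b Ja * A a Ja < 0 := sgnTrans hbxa oxa
      exact noDouble hFP hab (swap oba) oab
    · exact absurd h' hz'
    · rw [h'] at hbz
      have hbxc : 0 < A b Jc * A x Jc :=
        sgnPos (fun hc' => noDouble hFP (Ne.symm hbc) hc' (swap oxb)) hbz hxJc
      have obc : A b Jc * A c Jc < 0 := sgnTrans hbxc oxc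
      exact noDouble hFP hbc (swap ocb) obc
  · exact absurd h hz

lemma starWrap (hFP : ¬ HasFP A) {x a b c : Fin 4} {Ja Jb Jc : Fin 3}
    (hab : Ja ≠ Jb) (hac : Ja ≠ Jc) (hbc : Jb ≠ Jc)
    (oxa : A x Ja * A a Ja < 0) (oxb : A x Jb * A b Jb < 0) (oxc : A x Jc * A c Jc < 0)
    (haext : ∃ z, z ≠ Ja ∧ A a z ≠ 0)
    (hbext : ∃ z, z ≠ Jb ∧ A b z ≠ 0) (hcext : ∃ z, z ≠ Jc ∧ A c z ≠ 0) : False := by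
  obtain ⟨z, hz, haz⟩ := haext
  rcases fin3_cover Ja Jb Jc hab hac hbc z with h | h | h
  · exact absurd h hz
  · exact starCore hFP hab hac hbc oxa oxb oxc (h ▸ haz) hbext hcext
  · exact starCore hFP hac hab (Ne.symm hbc) oxa oxc oxb (h ▸ haz) hcext hbext
end Star

def Blocks (A : Matrix (Fin 4) (Fin 3) ℝ) : Prop :=
  ∃ mm s1 s2 : Fin 3, mm ≠ s1 ∧ mm ≠ s2 ∧ s1 ≠ s2 ∧
    ∀ i, (A i mm < 0 ∧ A i s2 = 0) ∨ (0 < A i mm ∧ A i s1 = 0)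

lemma rowNe {m n : ℕ} {A : Matrix (Fin m) (Fin n) ℝ} {u v : Fin m} {jj : Fin n}
    (h : A u jj * A v jj < 0) : u ≠ v := by
  rintro rfl; nlinarith [mul_self_nonneg (A u jj)]


lemma p4C {A : Matrix (Fin 4) (Fin 3) ℝ} (hFP : ¬ HasFP A) {a b c d : Fin 4} {α β γ : Fin 3}
    (cab : α ≠ β) (cag : α ≠ γ) (cbg : β ≠ γ)
    (oab : A a α * A b α < 0) (obc : A b β * A c β < 0) (ocd : A c γ * A d γ < 0)
    (haext : ∃ z, z ≠ α ∧ A a z ≠ 0) (hdext : ∃ z, z ≠ γ ∧ A d z ≠ 0) :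
    Blocks A := by
  have swap : ∀ {r s : Fin 4} {jj : Fin 3}, A r jj * A s jj < 0 → A s jj * A r jj < 0 :=
    fun h => by rwa [mul_comm]
  have haα : A a α ≠ 0 := left_ne_zero_of_mul (ne_of_lt oab)
  have hbα : A b α ≠ 0 := right_ne_zero_of_mul (ne_of_lt oab)
  have hbβ : A b β ≠ 0 := left_ne_zero_of_mul (ne_of_lt obc)
  have hcβ : A c β ≠ 0 := right_ne_zero_of_mul (ne_of_lt obc)
  have hcγ : A c γ ≠ 0 := left_ne_zero_of_mul (ne_of_lt ocd)
  have hdγ : A d γ ≠ 0 := right_ne_zero_of_mul (ne_of_lt ocd)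
  obtain ⟨z, hz, haz⟩ := haext
  rcases fin3_cover α β γ cab cag cbg z with h | h | h
  · exact absurd h hz
  · -- a has an entry in column β : this is the structured case
    rw [h] at haz
    have habβ : 0 < A a β * A b β :=
      sgnPos (fun hc' => noDouble hFP (Ne.symm cab) hc' oab) haz hbβ
    have oacβ : A a β * A c β < 0 := sgnTrans habβ obc
    have hcα : A c α = 0 := sgnZ oab
      (fun hc' => noDouble hFP cab hc' (swap oacβ))
      (fun hc' => noDouble hFP cab hc' (swap obc))
    have hdα : A d α = 0 := sgnZ oab
      (fun hc' => noTriangle hFP cab cag cbg hc' oacβ ocd)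
      (fun hc' => noTriangle hFP cab cag cbg hc' obc ocd)
    have hdβ : A d β ≠ 0 := by
      obtain ⟨z', hz', hdz⟩ := hdext
      rcases fin3_cover α β γ cab cag cbg z' with h' | h' | h'
      · rw [h'] at hdz; exact absurd hdα hdz
      · rwa [h'] at hdz
      · exact absurd h' hz'
    have hdcβ : 0 < A d β * A c β :=
      sgnPos (fun hc' => noDouble hFP cbg hc' (swap ocd)) hdβ hcβ
    have odbβ : A d β * A b β < 0 := sgnTrans hdcβ (swap obc)
    have odaβ : A d β * A a β < 0 := sgnTrans hdcβ (swap oacβ)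
    have haγ : A a γ = 0 := sgnZ ocd
      (fun hc' => noDouble hFP (Ne.symm cbg) hc' oacβ)
      (fun hc' => noTriangle hFP cab cag cbg oab (swap odbβ) (swap hc'))
    have hbγ : A b γ = 0 := sgnZ ocd
      (fun hc' => noDouble hFP (Ne.symm cbg) hc' obc)
      (fun hc' => noDouble hFP (Ne.symm cbg) hc' (swap odbβ))
    have hab' : a ≠ b := rowNe oab
    have hbc' : b ≠ c := rowNe obc
    have hcd' : c ≠ d := rowNe ocd
    have hac' : a ≠ c := rowNe oacβ
    have had' : a ≠ d := (rowNe odaβ).symm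
    have hbd' : b ≠ d := (rowNe odbβ).symm
    rcases lt_trichotomy (A a β) 0 with haneg | hz0 | hapos
    · have hbneg : A b β < 0 := by nlinarith
      have hcpos : 0 < A c β := by nlinarith
      have hdpos : 0 < A d β := by nlinarith
      refine ⟨β, α, γ, Ne.symm cab, cbg, cag, fun i => ?_⟩
      rcases fin4_cover a b c d hab' hac' had' hbc' hbd' hcd' i with h' | h' | h' | h'
      · rw [h']; exact Or.inl ⟨haneg, haγ⟩
      · rw [h']; exact Or.inl ⟨hbneg, hbγ⟩
      · rw [h']; exact Or.inr ⟨hcpos, hcα⟩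
      · rw [h']; exact Or.inr ⟨hdpos, hdα⟩
    · exact absurd hz0 haz
    · have hbpos : 0 < A b β := by nlinarith
      have hcneg : A c β < 0 := by nlinarith
      have hdneg : A d β < 0 := by nlinarith
      refine ⟨β, γ, α, cbg, Ne.symm cab, Ne.symm cag, fun i => ?_⟩
      rcases fin4_cover a b c d hab' hac' had' hbc' hbd' hcd' i with h' | h' | h' | h'
      · rw [h']; exact Or.inr ⟨hapos, haγ⟩
      · rw [h']; exact Or.inr ⟨hbpos, hbγ⟩
      · rw [h']; exact Or.inl ⟨hcneg, hcα⟩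
      · rw [h']; exact Or.inl ⟨hdneg, hdα⟩
  · -- a has an entry in column γ : contradiction
    rw [h] at haz
    exfalso
    have hacγ : 0 < A a γ * A c γ :=
      sgnPos (fun hc' => noTriangle hFP cab cag cbg oab obc (swap hc')) haz hcγ
    have oadγ : A a γ * A d γ < 0 := sgnTrans hacγ ocd
    obtain ⟨z', hz', hdz⟩ := hdext
    rcases fin3_cover α β γ cab cag cbg z' with h' | h' | h'
    · rw [h'] at hdz
      have hdaα : 0 < A d α * A a α :=
        sgnPos (fun hc' => noDouble hFP cag hc' (swap oadγ)) hdz haα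
      have odbα : A d α * A b α < 0 := sgnTrans hdaα oab
      exact noTriangle hFP cab cag cbg odbα obc ocd
    · rw [h'] at hdz
      have hdcβ : 0 < A d β * A c β :=
        sgnPos (fun hc' => noDouble hFP cbg hc' (swap ocd)) hdz hcβ
      have odbβ : A d β * A b β < 0 := sgnTrans hdcβ (swap obc)
      exact noTriangle hFP cab cag cbg oab (swap odbβ) (swap oadγ)
    · exact absurd h' hz'

lemma fin4_no5 (v w x y z : Fin 4) (h1 : v ≠ w) (h2 : v ≠ x) (h3 : v ≠ y) (h4 : v ≠ z)
    (h5 : w ≠ x) (h6 : w ≠ y) (h7 : w ≠ z) (h8 : x ≠ y) (h9 : x ≠ z) (h10 : y ≠ z) :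
    False := by
  simp only [ne_eq, Fin.ext_iff] at h1 h2 h3 h4 h5 h6 h7 h8 h9 h10
  omega

lemma sharedCase {A : Matrix (Fin 4) (Fin 3) ℝ} (hFP : ¬ HasFP A) {x a b p2 n2 : Fin 4}
    {J0 J1 J2 : Fin 3} (c01 : J0 ≠ J1) (c02 : J0 ≠ J2) (c12 : J1 ≠ J2)
    (oxa : A x J0 * A a J0 < 0) (oxb : A x J1 * A b J1 < 0) (o2 : A p2 J2 * A n2 J2 < 0)
    (haext : ∃ z, z ≠ J0 ∧ A a z ≠ 0) (hbext : ∃ z, z ≠ J1 ∧ A b z ≠ 0)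
    (hpext : ∃ z, z ≠ J2 ∧ A p2 z ≠ 0) (hnext : ∃ z, z ≠ J2 ∧ A n2 z ≠ 0) :
    Blocks A := by
  have swap : ∀ {r s : Fin 4} {jj : Fin 3}, A r jj * A s jj < 0 → A s jj * A r jj < 0 :=
    fun h => by rwa [mul_comm]
  have hxa : x ≠ a := rowNe oxa
  have hxb : x ≠ b := rowNe oxb
  have hpn : p2 ≠ n2 := rowNe o2
  have hab : a ≠ b := fun he => noDouble hFP c01 oxa (by rw [he]; exact oxb)
  by_cases hpx : p2 = x
  · rw [hpx] at o2 hpext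
    exact absurd (starWrap hFP c01 c02 c12 oxa oxb o2 haext hbext hnext) not_false
  by_cases hnx : n2 = x
  · rw [hnx] at o2 hnext
    exact absurd (starWrap hFP c01 c02 c12 oxa oxb (swap o2) haext hbext hpext) not_false
  by_cases hpa : p2 = a
  · rw [hpa] at o2 hpext
    by_cases hnb : n2 = b
    · rw [hnb] at o2
      exact absurd (noTriangle hFP c02 c01 (Ne.symm c12) oxa o2 (swap oxb)) not_false
    · exact p4C hFP (Ne.symm c01) c12 c02 (swap oxb) oxa o2 hbext hnext
  by_cases hpb : p2 = b
  · rw [hpb] at o2 hpext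
    by_cases hna : n2 = a
    · rw [hna] at o2
      exact absurd (noTriangle hFP c02 c01 (Ne.symm c12) oxa (swap o2) (swap oxb)) not_false
    · exact p4C hFP c01 c02 c12 (swap oxa) oxb o2 haext hnext
  by_cases hna : n2 = a
  · rw [hna] at o2
    exact p4C hFP (Ne.symm c01) c12 c02 (swap oxb) oxa (swap o2) hbext hpext
  by_cases hnb : n2 = b
  · rw [hnb] at o2
    exact p4C hFP c01 c02 c12 (swap oxa) oxb (swap o2) haext hpext
  exact absurd (fin4_no5 x a b p2 n2 hxa hxb (Ne.symm hpx) (Ne.symm hnx) hab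
    (Ne.symm hpa) (Ne.symm hna) (Ne.symm hpb) (Ne.symm hnb) hpn) not_false

lemma case2 {A : Matrix (Fin 4) (Fin 3) ℝ} (hFP : ¬ HasFP A)
    (hw : ∀ j : Fin 3, (∃ p, 0 < A p j ∧ ∃ z, z ≠ j ∧ A p z ≠ 0) ∧
      (∃ q, A q j < 0 ∧ ∃ z, z ≠ j ∧ A q z ≠ 0)) :
    Blocks A := by
  have swap : ∀ {r s : Fin 4} {jj : Fin 3}, A r jj * A s jj < 0 → A s jj * A r jj < 0 :=
    fun h => by rwa [mul_comm]
  obtain ⟨⟨p0, hp0, ep0⟩, ⟨n0, hn0, en0⟩⟩ := hw 0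
  obtain ⟨⟨p1, hp1, ep1⟩, ⟨n1, hn1, en1⟩⟩ := hw 1
  obtain ⟨⟨p2, hp2, ep2⟩, ⟨n2, hn2, en2⟩⟩ := hw 2
  have o0 : A p0 0 * A n0 0 < 0 := mul_neg_of_pos_of_neg hp0 hn0
  have o1 : A p1 1 * A n1 1 < 0 := mul_neg_of_pos_of_neg hp1 hn1
  have o2 : A p2 2 * A n2 2 < 0 := mul_neg_of_pos_of_neg hp2 hn2
  have c01 : (0 : Fin 3) ≠ 1 := by decide
  have c02 : (0 : Fin 3) ≠ 2 := by decide
  have c12 : (1 : Fin 3) ≠ 2 := by decide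
  by_cases h1 : p0 = p1
  · exact sharedCase hFP c01 c02 c12 o0 (by rw [h1]; exact o1) o2 en0 en1 ep2 en2
  by_cases h2 : p0 = n1
  · exact sharedCase hFP c01 c02 c12 o0 (by rw [h2]; exact swap o1) o2 en0 ep1 ep2 en2
  by_cases h3 : n0 = p1
  · exact sharedCase hFP c01 c02 c12 (swap o0) (by rw [h3]; exact o1) o2 ep0 en1 ep2 en2
  by_cases h4 : n0 = n1
  · exact sharedCase hFP c01 c02 c12 (swap o0) (by rw [h4]; exact swap o1) o2 ep0 ep1 ep2 en2
  -- e0 and e1 are disjoint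
  have hd0 : p0 ≠ n0 := rowNe o0
  have hd1 : p1 ≠ n1 := rowNe o1
  have cov : ∀ i : Fin 4, i = p0 ∨ i = n0 ∨ i = p1 ∨ i = n1 := by
    intro i
    simp only [Fin.ext_iff] at *
    omega
  have c20 : (2 : Fin 3) ≠ 0 := by decide
  have c21 : (2 : Fin 3) ≠ 1 := by decide
  rcases cov p2 with h | h | h | h <;> rcases cov n2 with h' | h' | h' | h' <;>
    rw [h, h'] at o2
  · exact absurd o2 (not_lt.mpr (mul_self_nonneg (A p0 2)))
  · exact absurd (noDouble hFP c02 o0 o2) not_false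
  · exact p4C hFP c02 c01 c21 (swap o0) o2 o1 en0 en1
  · exact p4C hFP c02 c01 c21 (swap o0) o2 (swap o1) en0 ep1
  · exact absurd (noDouble hFP c02 o0 (swap o2)) not_false
  · exact absurd o2 (not_lt.mpr (mul_self_nonneg (A n0 2)))
  · exact p4C hFP c02 c01 c21 o0 o2 o1 ep0 en1
  · exact p4C hFP c02 c01 c21 o0 o2 (swap o1) ep0 ep1
  · exact p4C hFP c02 c01 c21 (swap o0) (swap o2) o1 en0 en1
  · exact p4C hFP c02 c01 c21 o0 (swap o2) o1 ep0 en1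
  · exact absurd o2 (not_lt.mpr (mul_self_nonneg (A p1 2)))
  · exact absurd (noDouble hFP c12 o1 o2) not_false
  · exact p4C hFP c02 c01 c21 (swap o0) (swap o2) (swap o1) en0 ep1
  · exact p4C hFP c02 c01 c21 o0 (swap o2) (swap o1) ep0 ep1
  · exact absurd (noDouble hFP c12 o1 (swap o2)) not_false
  · exact absurd o2 (not_lt.mpr (mul_self_nonneg (A n1 2)))

lemma aff {bb r C : ℝ} (u1 u2 v : ℕ) (hv1 : min u1 u2 ≤ v) (hv2 : v ≤ max u1 u2)
    (e1 : bb ≤ C + r * u1) (e2 : bb ≤ C + r * u2) : bb ≤ C + r * v := by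
  rcases le_total u1 u2 with h | h
  · rcases le_total r 0 with hr | hr
    · have hc : (v : ℝ) ≤ (u2 : ℝ) := by exact_mod_cast (by omega : v ≤ u2)
      have := mul_le_mul_of_nonpos_left hc hr
      linarith
    · have hc : (u1 : ℝ) ≤ (v : ℝ) := by exact_mod_cast (by omega : u1 ≤ v)
      have := mul_le_mul_of_nonneg_left hc hr
      linarith
  · rcases le_total r 0 with hr | hr
    · have hc : (v : ℝ) ≤ (u1 : ℝ) := by exact_mod_cast (by omega : v ≤ u1)
      have := mul_le_mul_of_nonpos_left hc hr
      linarith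
    · have hc : (u2 : ℝ) ≤ (v : ℝ) := by exact_mod_cast (by omega : u2 ≤ v)
      have := mul_le_mul_of_nonneg_left hc hr
      linarith

lemma hardCore {dd : ℕ} {A : Matrix (Fin 4) (Fin 3) ℝ} {b : Fin 4 → ℝ} {mm s1 s2 : Fin 3}
    (h1 : mm ≠ s1) (h2 : mm ≠ s2) (h3 : s1 ≠ s2)
    (hblk : ∀ i, (A i mm < 0 ∧ A i s2 = 0) ∨ (0 < A i mm ∧ A i s1 = 0))
    (x y : Fin 3 → ℕ) (hx : Feas dd A b x) (hy : Feas dd A b y) (hm : x mm ≤ y mm) :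
    Relation.ReflTransGen (SGAdj dd A b) x y := by
  have sumEq : ∀ (z : Fin 3 → ℕ) (i : Fin 4), ∑ j, A i j * (z j : ℝ)
      = A i mm * (z mm : ℝ) + A i s1 * (z s1 : ℝ) + A i s2 * (z s2 : ℝ) :=
    fun z i => sum3 (fun j => A i j * (z j : ℝ)) mm s1 s2 h1 h2 h3
  have hx1 : ∀ i, A i mm < 0 → A i s2 = 0 →
      b i ≤ A i mm * (x mm : ℝ) + A i s1 * (x s1 : ℝ) := by
    intro i hn hz
    have h' := hx.2 i
    rw [sumEq, hz] at h'
    linarith [h']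
  have hy1 : ∀ i, A i mm < 0 → A i s2 = 0 →
      b i ≤ A i mm * (y mm : ℝ) + A i s1 * (y s1 : ℝ) := by
    intro i hn hz
    have h' := hy.2 i
    rw [sumEq, hz] at h'
    linarith [h']
  have hx2 : ∀ i, 0 < A i mm → A i s1 = 0 →
      b i ≤ A i mm * (x mm : ℝ) + A i s2 * (x s2 : ℝ) := by
    intro i hp hz
    have h' := hx.2 i
    rw [sumEq, hz] at h'
    linarith [h']
  have hy2 : ∀ i, 0 < A i mm → A i s1 = 0 →
      b i ≤ A i mm * (y mm : ℝ) + A i s2 * (y s2 : ℝ) := by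
    intro i hp hz
    have h' := hy.2 i
    rw [sumEq, hz] at h'
    linarith [h']
  have hmR : (x mm : ℝ) ≤ (y mm : ℝ) := Nat.cast_le.mpr hm
  -- walk 1 : move coordinate s1 to its final value
  have w1 : ∀ v : ℕ, min (y s1) (x s1) ≤ v → v ≤ max (y s1) (x s1) →
      Feas dd A b (Function.update x s1 v) := by
    intro v hv1 hv2
    have hvd : v ≤ dd := by have := hx.1 s1; have := hy.1 s1; omega
    constructor
    · intro j
      by_cases hj : j = s1
      · rw [hj, Function.update_self]; exact hvd
      · rw [Function.update_of_ne hj]; exact hx.1 j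
    · intro i
      rw [sumEq]
      rw [Function.update_of_ne h1, Function.update_self,
        Function.update_of_ne (Ne.symm h3)]
      rcases hblk i with ⟨hn, hz⟩ | ⟨hp, hz⟩
      · rw [hz]
        have e1 : b i ≤ A i mm * (x mm : ℝ) + A i s1 * (x s1 : ℝ) := hx1 i hn hz
        have e2 : b i ≤ A i mm * (x mm : ℝ) + A i s1 * (y s1 : ℝ) := by
          have := hy1 i hn hz
          nlinarith [mul_le_mul_of_nonpos_left hmR (le_of_lt hn)]
        have := aff (y s1) (x s1) v hv1 hv2 e2 e1
        linarith
      · rw [hz]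
        have := hx2 i hp hz
        linarith
  have path1 := walk x s1 (y s1) (fun v hv hv' => w1 v hv hv')
  set x1 := Function.update x s1 (y s1) with hx1def
  have hx1mm : x1 mm = x mm := Function.update_of_ne h1 _ _
  have hx1s1 : x1 s1 = y s1 := Function.update_self _ _ _
  have hx1s2 : x1 s2 = x s2 := Function.update_of_ne (Ne.symm h3) _ _
  have hx1feas : Feas dd A b x1 := w1 (y s1) (by omega) (by omega)
  -- walk 2 : move coordinate mm up to its final value
  have w2 : ∀ v : ℕ, min (y mm) (x1 mm) ≤ v → v ≤ max (y mm) (x1 mm) →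
      Feas dd A b (Function.update x1 mm v) := by
    intro v hv1 hv2
    rw [hx1mm] at hv1 hv2
    have hvlo : x mm ≤ v := by omega
    have hvhi : v ≤ y mm := by omega
    have hvloR : (x mm : ℝ) ≤ (v : ℝ) := Nat.cast_le.mpr hvlo
    have hvhiR : (v : ℝ) ≤ (y mm : ℝ) := Nat.cast_le.mpr hvhi
    have hvd : v ≤ dd := by have := hy.1 mm; omega
    constructor
    · intro j
      by_cases hj : j = mm
      · rw [hj, Function.update_self]; exact hvd
      · rw [Function.update_of_ne hj]; exact hx1feas.1 j
    · intro i
      rw [sumEq]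
      rw [Function.update_self, Function.update_of_ne (Ne.symm h1),
        Function.update_of_ne (Ne.symm h2), hx1s1, hx1s2]
      rcases hblk i with ⟨hn, hz⟩ | ⟨hp, hz⟩
      · rw [hz]
        have := hy1 i hn hz
        nlinarith [mul_le_mul_of_nonpos_left hvhiR (le_of_lt hn)]
      · rw [hz]
        have := hx2 i hp hz
        nlinarith [mul_le_mul_of_nonneg_left hvloR (le_of_lt hp)]
  have path2 := walk x1 mm (y mm) (fun v hv hv' => w2 v hv hv')
  set x2 := Function.update x1 mm (y mm) with hx2def
  have hx2mm : x2 mm = y mm := Function.update_self _ _ _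
  have hx2s1 : x2 s1 = y s1 := by rw [hx2def, Function.update_of_ne (Ne.symm h1), hx1s1]
  have hx2s2 : x2 s2 = x s2 := by rw [hx2def, Function.update_of_ne (Ne.symm h2), hx1s2]
  have hx2feas : Feas dd A b x2 := w2 (y mm) (by rw [hx1mm]; omega) (by rw [hx1mm]; omega)
  -- walk 3 : move coordinate s2 to its final value
  have w3 : ∀ v : ℕ, min (y s2) (x2 s2) ≤ v → v ≤ max (y s2) (x2 s2) →
      Feas dd A b (Function.update x2 s2 v) := by
    intro v hv1 hv2
    rw [hx2s2] at hv1 hv2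
    have hvd : v ≤ dd := by have := hx.1 s2; have := hy.1 s2; omega
    constructor
    · intro j
      by_cases hj : j = s2
      · rw [hj, Function.update_self]; exact hvd
      · rw [Function.update_of_ne hj]; exact hx2feas.1 j
    · intro i
      rw [sumEq]
      rw [Function.update_self, Function.update_of_ne h2,
        Function.update_of_ne h3, hx2mm, hx2s1]
      rcases hblk i with ⟨hn, hz⟩ | ⟨hp, hz⟩
      · rw [hz]
        have := hy1 i hn hz
        linarith
      · rw [hz]
        have e1 : b i ≤ A i mm * (y mm : ℝ) + A i s2 * (x s2 : ℝ) := by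
          have := hx2 i hp hz
          nlinarith [mul_le_mul_of_nonneg_left hmR (le_of_lt hp)]
        have e2 : b i ≤ A i mm * (y mm : ℝ) + A i s2 * (y s2 : ℝ) := hy2 i hp hz
        have := aff (y s2) (x s2) v hv1 hv2 e2 e1
        linarith
  have path3 := walk x2 s2 (y s2) (fun v hv hv' => w3 v hv hv')
  have hfin : Function.update x2 s2 (y s2) = y := by
    funext j
    by_cases hj2 : j = s2
    · rw [hj2, Function.update_self]
    · rw [Function.update_of_ne hj2]
      by_cases hjm : j = mm
      · rw [hjm, hx2mm]
      · have hjs1 : j = s1 := by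
          have hc : j = mm ∨ j = s1 ∨ j = s2 := by
            simp only [Fin.ext_iff] at h1 h2 h3 hjm hj2 ⊢
            omega
          tauto
        rw [hjs1, hx2s1]
  rw [hfin] at path3
  exact path1.trans (path2.trans path3)


theorem stmt12 (d : ℕ) (hd : 1 ≤ d) (A : Matrix (Fin 4) (Fin 3) ℝ)
    (h : ¬ HasFP A) : UnivConn d A := by
  intro b x y hx hy
  by_cases hE : ∃ j, CanElim A Finset.univ j
  · exact connAux d A b Finset.univ (elimAll h hE) x y hx hy
      (fun j hj => absurd (Finset.mem_univ j) hj)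
  · push_neg at hE
    have hw : ∀ j : Fin 3, (∃ p, 0 < A p j ∧ ∃ z, z ≠ j ∧ A p z ≠ 0) ∧
        (∃ q, A q j < 0 ∧ ∃ z, z ≠ j ∧ A q z ≠ 0) := by
      intro j
      have hne := hE j
      rw [CanElim] at hne
      push_neg at hne
      obtain ⟨⟨p, hp, jp, _, hjp, hpe⟩, ⟨q, hq, jq, _, hjq, hqe⟩⟩ := hne
      exact ⟨⟨p, hp, jp, hjp, hpe⟩, ⟨q, hq, jq, hjq, hqe⟩⟩
    obtain ⟨mm, s1, s2, hms1, hms2, hs12, hblk⟩ := case2 h hw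
    rcases le_total (x mm) (y mm) with hc | hc
    · exact hardCore hms1 hms2 hs12 hblk x y hx hy hc
    · exact rtg_symm (hardCore hms1 hms2 hs12 hblk y x hy hx hc)
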